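/- arXiv:1508.03688 — 5 statements merged into one kernel-verified Lean document; each statement's English description precedes it below -/
import Mathlib

section
/- Let D = {D_a}_{a ∈ A} be a cover of a small category C, indexed by a totally ordered set A, and let I : Gr(Č^o(D)) → Gr(Č(D)) be the inclusion functor. Then there exist functors J : Gr(Č(D)) → Gr(Č^o(D)) and K : Gr(Č(D)) → Gr(Č(D)) such that J ∘ I is the identity functor of Gr(Č^o(D)), and there exist natural transformations t : K ⇒ I ∘ J and s : K ⇒ id_{Gr(Č(D))}. Here J sends an object x_{a_0…a_n} to x_{a_{σ(0)}…a_{σ(n)}}, where σ is the permutation reordering the indices into nondecreasing order (preserving the original order of equal indices), and K sends x_{a_0…a_n} to x_{a_0…a_n a_{σ(0)}…a_{σ(n)}}. -/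
open CategoryTheory

namespace CechCover

/-- A subcategory of a small category `C`: a set of objects together with, for each
pair of objects of `C`, a set of morphisms, closed under identities (of objects of the
subcategory) and under composition, all morphisms lying between objects of the
subcategory. -/
structure Subcat (C : Type) [SmallCategory C] where
  objs : Set C
  homs : ∀ x y : C, Set (x ⟶ y)
  homs_subset : ∀ (x y : C), (homs x y).Nonempty → x ∈ objs ∧ y ∈ objs
  id_mem : ∀ x ∈ objs, 𝟙 x ∈ homs x x
  comp_mem : ∀ {x y z : C} (f : x ⟶ y) (g : y ⟶ z),
    f ∈ homs x y → g ∈ homs y z → f ≫ g ∈ homs x z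

variable {C : Type} [SmallCategory C] {A : Type}

/-- The morphisms of the union `⋃ a, D a` of a family of subcategories: those
generated under composition by the morphisms of the `D a`. -/
inductive GenHom (D : A → Subcat C) : ∀ {x y : C}, (x ⟶ y) → Prop
  | of {x y : C} (a : A) (f : x ⟶ y) (hf : f ∈ (D a).homs x y) : GenHom D f
  | comp {x y z : C} (f : x ⟶ y) (g : y ⟶ z) :
      GenHom D f → GenHom D g → GenHom D (f ≫ g)

/-- `D` is a cover of `C`: the union of the subcategories `D a` is all of `C`. -/
def IsCover (D : A → Subcat C) : Prop :=
  (∀ x : C, ∃ a, x ∈ (D a).objs) ∧ ∀ {x y : C} (f : x ⟶ y), GenHom D f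

/-- An ideal of `C`: a full subcategory such that an object `y` belongs to it whenever
`C(y, x)` is nonempty for some object `x` of it. -/
def Subcat.IsIdeal (Dv : Subcat C) : Prop :=
  (∀ x y : C, x ∈ Dv.objs → y ∈ Dv.objs → Dv.homs x y = Set.univ) ∧
  ∀ x y : C, x ∈ Dv.objs → Nonempty (y ⟶ x) → y ∈ Dv.objs

/-- A filter of `C`: a full subcategory such that an object `y` belongs to it whenever
`C(x, y)` is nonempty for some object `x` of it. -/
def Subcat.IsFilter (Dv : Subcat C) : Prop :=
  (∀ x y : C, x ∈ Dv.objs → y ∈ Dv.objs → Dv.homs x y = Set.univ) ∧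
  ∀ x y : C, x ∈ Dv.objs → Nonempty (x ⟶ y) → y ∈ Dv.objs

/-- Objects of the Grothendieck construction `Gr(Č(D))` of the Čech nerve of a cover
`D`: tuples `x_{a₀…aₙ}` where `x` belongs to the intersection `D_{a₀} ∩ ⋯ ∩ D_{aₙ}`. -/
structure GrCechObj (D : A → Subcat C) where
  n : ℕ
  idx : Fin (n + 1) → A
  pt : C
  mem : ∀ i, pt ∈ (D (idx i)).objs

/-- Morphisms `x_{a₀…aₙ} ⟶ y_{b₀…bₘ}` of `Gr(Č(D))`: pairs `(φ, f)` of an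
order-preserving map `φ : [m] → [n]` with `b_j = a_{φ(j)}` for all `j`, and a morphism
`f : x ⟶ y` of the intersection `D_{b₀…bₘ}`. -/
structure GrCechHom (D : A → Subcat C) (X Y : GrCechObj D) where
  φ : Fin (Y.n + 1) →o Fin (X.n + 1)
  idx_eq : ∀ j, Y.idx j = X.idx (φ j)
  f : X.pt ⟶ Y.pt
  mem : ∀ j, f ∈ (D (Y.idx j)).homs X.pt Y.pt

theorem GrCechHom.ext' {D : A → Subcat C} {X Y : GrCechObj D}
    {F G : GrCechHom D X Y} (h1 : F.φ = G.φ) (h2 : F.f = G.f) : F = G := by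
  cases F; cases G; cases h1; cases h2; rfl

/-- The Grothendieck construction `Gr(Č(D))` of the Čech nerve, as a category. -/
instance GrCech.category (D : A → Subcat C) : Category (GrCechObj D) where
  Hom X Y := GrCechHom D X Y
  id X :=
    { φ := OrderHom.id
      idx_eq := fun _ => rfl
      f := 𝟙 X.pt
      mem := fun j => (D (X.idx j)).id_mem _ (X.mem j) }
  comp {X Y Z} F G :=
    { φ := F.φ.comp G.φ
      idx_eq := fun j => (G.idx_eq j).trans (F.idx_eq (G.φ j))
      f := F.f ≫ G.f
      mem := fun j => (D (Z.idx j)).comp_mem F.f G.f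
        (by rw [G.idx_eq j]; exact F.mem (G.φ j)) (G.mem j) }
  id_comp F := GrCechHom.ext' rfl (Category.id_comp _)
  comp_id F := GrCechHom.ext' rfl (Category.comp_id _)
  assoc F G H := GrCechHom.ext' rfl (Category.assoc _ _ _)

/-- The natural functor `ρ : Gr(Č(D)) ⥤ C` forgetting indices. -/
def grProj (D : A → Subcat C) : GrCechObj D ⥤ C where
  obj X := X.pt
  map F := F.f
  map_id _ := rfl
  map_comp _ _ := rfl

/-- The Grothendieck construction `Gr(Č^o(D))` of the ordered Čech nerve, with respect
to a total order `le` on the index set: the full subcategory of `Gr(Č(D))` on the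
objects with nondecreasing index tuple. -/
abbrev GrCechOrd (D : A → Subcat C) (le : A → A → Prop) : Type :=
  ObjectProperty.FullSubcategory (fun X : GrCechObj D => ∀ i j : Fin (X.n + 1), i ≤ j → le (X.idx i) (X.idx j))

/-- The inclusion functor `I : Gr(Č^o(D)) ⥤ Gr(Č(D))`. -/
def ordIncl (D : A → Subcat C) (le : A → A → Prop) : GrCechOrd D le ⥤ GrCechObj D :=
  ObjectProperty.ι _

/-- `x_{a_{σ(0)}…a_{σ(n)}}`: reindexing an object of `Gr(Č(D))` along a permutation
`σ`. -/
def sortObj {D : A → Subcat C} (X : GrCechObj D) (σ : Equiv.Perm (Fin (X.n + 1))) :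
    GrCechObj D where
  n := X.n
  idx := X.idx ∘ σ
  pt := X.pt
  mem i := X.mem (σ i)

/-- `x_{a_0…a_n a_{σ(0)}…a_{σ(n)}}`: doubling the index tuple of an object of
`Gr(Č(D))`, with the second half reindexed along a permutation `σ`. -/
def appendObj {D : A → Subcat C} (X : GrCechObj D) (σ : Equiv.Perm (Fin (X.n + 1))) :
    GrCechObj D where
  n := X.n + 1 + X.n
  idx := (Fin.append X.idx (X.idx ∘ σ) : Fin (X.n + 1 + (X.n + 1)) → A)
  pt := X.pt
  mem i := by
    refine Fin.addCases
      (motive := fun i : Fin (X.n + 1 + (X.n + 1)) =>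
        X.pt ∈ (D (Fin.append X.idx (X.idx ∘ σ) i)).objs) ?_ ?_ i
    · intro j; rw [Fin.append_left]; exact X.mem j
    · intro j; rw [Fin.append_right]; exact X.mem (σ j)

end CechCover

open CechCover

namespace CechCover

open Tuple

variable {C : Type} [SmallCategory C] {A : Type}

section Lemmas

variable {D : A → Subcat C}

lemma hom_ext_val {X Y : GrCechObj D} {F G : X ⟶ Y}
    (h1 : ∀ j, ((F.φ j : Fin (X.n + 1)) : ℕ) = ((G.φ j : Fin (X.n + 1)) : ℕ))
    (h2 : F.f = G.f) : F = G :=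
  GrCechHom.ext' (OrderHom.ext _ _ (funext fun j => Fin.ext (h1 j))) h2

@[simp] lemma comp_φ_apply {X Y Z : GrCechObj D} (F : X ⟶ Y) (G : Y ⟶ Z)
    (j : Fin (Z.n + 1)) : (F ≫ G).φ j = F.φ (G.φ j) := rfl

lemma eqToHom_f_ord {le : A → A → Prop} {X Y : GrCechOrd D le} (h : X = Y) :
    (eqToHom h : X ⟶ Y).hom.f = eqToHom (congrArg (fun Z : GrCechOrd D le => Z.obj.pt) h) := by
  subst h; rfl

lemma eqToHom_φ_val_ord {le : A → A → Prop} {X Y : GrCechOrd D le} (h : X = Y)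
    (j : Fin (Y.obj.n + 1)) :
    (((eqToHom h : X ⟶ Y).hom.φ j : Fin (X.obj.n + 1)) : ℕ) = (j : ℕ) := by subst h; rfl

end Lemmas

variable [LinearOrder A] {D : A → Subcat C}

lemma sort_stable {n : ℕ} (f : Fin n → A) {i j : Fin n} (hij : i < j)
    (h : f (sort f i) = f (sort f j)) : sort f i < sort f j :=
  ((Tuple.eq_sort_iff (f := f) (σ := sort f)).mp rfl).2 i j hij h

lemma sort_symm_mono {n : ℕ} (f : Fin n → A) {u v : Fin n}
    (huv : u ≤ v) (hf : f u = f v) : (sort f).symm u ≤ (sort f).symm v := by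
  by_contra hcon
  push_neg at hcon
  have := sort_stable f hcon (by simp [hf])
  simp only [Equiv.apply_symm_apply] at this
  exact absurd (this.trans_le huv) (lt_irrefl _)

/-- The order-preserving component of `J` on a morphism. -/
def sortMap {X Y : GrCechObj D} (F : X ⟶ Y) : Fin (Y.n + 1) →o Fin (X.n + 1) where
  toFun j := (sort X.idx).symm (F.φ (sort Y.idx j))
  monotone' := by
    intro i j hij
    rcases (Tuple.monotone_sort Y.idx hij).eq_or_lt with hv | hv
    · rcases eq_or_lt_of_le hij with rfl | hlt
      · exact le_refl _
      · have h1 : sort Y.idx i < sort Y.idx j := sort_stable Y.idx hlt hv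
        have h2 : F.φ (sort Y.idx i) ≤ F.φ (sort Y.idx j) := F.φ.monotone h1.le
        refine sort_symm_mono X.idx h2 ?_
        rw [← F.idx_eq, ← F.idx_eq]; exact hv
    · by_contra hcon
      push_neg at hcon
      have := Tuple.monotone_sort X.idx hcon.le
      simp only [Function.comp_apply, Equiv.apply_symm_apply] at this
      rw [← F.idx_eq, ← F.idx_eq] at this
      exact absurd (hv.trans_le this) (lt_irrefl _)

@[simp] lemma sortMap_val {X Y : GrCechObj D} (F : X ⟶ Y) (j : Fin (Y.n + 1)) :
    sortMap F j = (sort X.idx).symm (F.φ (sort Y.idx j)) := rfl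

lemma sortMap_id (X : GrCechObj D) : sortMap (𝟙 X) = OrderHom.id := by
  apply OrderHom.ext; funext j
  show (sort X.idx).symm ((𝟙 X : X ⟶ X).φ (sort X.idx j)) = j
  exact Equiv.symm_apply_apply _ _

lemma sortMap_comp {X Y Z : GrCechObj D} (F : X ⟶ Y) (G : Y ⟶ Z) :
    sortMap (F ≫ G) = (sortMap F).comp (sortMap G) := by
  apply OrderHom.ext; funext j
  show (sort X.idx).symm ((F ≫ G).φ (sort Z.idx j))
    = (sort X.idx).symm (F.φ (sort Y.idx ((sort Y.idx).symm (G.φ (sort Z.idx j)))))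
  rw [Equiv.apply_symm_apply, comp_φ_apply]

set_option maxHeartbeats 1000000 in
/-- The functor `J`. -/
def Jfun (D : A → Subcat C) [LinearOrder A] : GrCechObj D ⥤ GrCechOrd D (· ≤ ·) where
  obj X := ⟨sortObj X (sort X.idx), fun i j hij => Tuple.monotone_sort X.idx hij⟩
  map {X Y} F := InducedCategory.homMk
    { φ := sortMap (X := X) (Y := Y) F
      idx_eq := fun j => by
        show Y.idx (sort Y.idx j)
          = X.idx (sort X.idx ((sort X.idx).symm (F.φ (sort Y.idx j))))
        rw [Equiv.apply_symm_apply]; exact F.idx_eq _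
      f := F.f
      mem := fun j => F.mem (sort Y.idx j) }
  map_id X := InducedCategory.hom_ext (GrCechHom.ext' (sortMap_id X) (by exact rfl))
  map_comp {X Y Z} F G := InducedCategory.hom_ext (GrCechHom.ext' (sortMap_comp F G) (by exact rfl))

/-- The combination of two order-preserving maps on a sum of `Fin`s. -/
def combine {p q r s : ℕ} (u : Fin p →o Fin r) (v : Fin q →o Fin s) :
    Fin (p + q) →o Fin (r + s) where
  toFun i :=
    if h : (i : ℕ) < p then
      ⟨(u ⟨i, h⟩ : Fin r), by have := (u ⟨i, h⟩).2; omega⟩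
    else
      ⟨r + (v ⟨(i : ℕ) - p, by have := i.2; omega⟩ : Fin s), by
        have := (v ⟨(i : ℕ) - p, by have := i.2; omega⟩).2; omega⟩
  monotone' := by
    intro i j hij
    have hij' : (i : ℕ) ≤ (j : ℕ) := hij
    by_cases hi : (i : ℕ) < p <;> by_cases hj : (j : ℕ) < p
    · simp only [dif_pos hi, dif_pos hj]
      exact u.monotone (show (⟨(i:ℕ), hi⟩ : Fin p) ≤ ⟨(j:ℕ), hj⟩ from hij')
    · simp only [dif_pos hi, dif_neg hj, Fin.mk_le_mk]
      have := (u ⟨(i:ℕ), hi⟩).2; omega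
    · omega
    · simp only [dif_neg hi, dif_neg hj, Fin.mk_le_mk]
      have := v.monotone (show (⟨(i:ℕ) - p, by have := i.2; omega⟩ : Fin q)
        ≤ ⟨(j:ℕ) - p, by have := j.2; omega⟩ from Fin.mk_le_mk.mpr (by omega))
      omega

lemma combine_val_lt {p q r s : ℕ} (u : Fin p →o Fin r) (v : Fin q →o Fin s)
    (i : Fin (p + q)) (h : (i : ℕ) < p) :
    ((combine u v i : Fin (r + s)) : ℕ) = (u ⟨i, h⟩ : ℕ) := by
  show ((dite _ _ _ : Fin (r+s)) : ℕ) = _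
  rw [dif_pos h]

lemma combine_val_ge {p q r s : ℕ} (u : Fin p →o Fin r) (v : Fin q →o Fin s)
    (i : Fin (p + q)) (h : ¬ (i : ℕ) < p) :
    ((combine u v i : Fin (r + s)) : ℕ)
      = r + (v ⟨(i : ℕ) - p, by have := i.2; omega⟩ : ℕ) := by
  show ((dite _ _ _ : Fin (r+s)) : ℕ) = _
  rw [dif_neg h]

lemma combine_castAdd {p q r s : ℕ} (u : Fin p →o Fin r) (v : Fin q →o Fin s)
    (i : Fin p) : combine u v (Fin.castAdd q i) = Fin.castAdd s (u i) := by
  apply Fin.ext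
  rw [combine_val_lt u v _ (by simpa using i.2)]
  simp

lemma combine_natAdd {p q r s : ℕ} (u : Fin p →o Fin r) (v : Fin q →o Fin s)
    (i : Fin q) : combine u v (Fin.natAdd p i) = Fin.natAdd r (v i) := by
  apply Fin.ext
  rw [combine_val_ge u v _ (by simp)]
  simp

lemma combine_id {p q : ℕ} :
    combine (OrderHom.id : Fin p →o Fin p) (OrderHom.id : Fin q →o Fin q)
      = OrderHom.id := by
  apply OrderHom.ext; funext i; apply Fin.ext
  by_cases h : (i : ℕ) < p
  · rw [combine_val_lt _ _ _ h]; rfl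
  · rw [combine_val_ge _ _ _ h]
    show p + ((i : ℕ) - p) = ((i : Fin (p+q)) : ℕ)
    omega

lemma combine_comp {p q p' q' p'' q'' : ℕ}
    (a : Fin p →o Fin p') (b : Fin q →o Fin q')
    (c : Fin p' →o Fin p'') (d : Fin q' →o Fin q'') :
    (combine c d).comp (combine a b) = combine (c.comp a) (d.comp b) := by
  apply OrderHom.ext; funext i; apply Fin.ext
  by_cases h : (i : ℕ) < p
  · have h1 := combine_val_lt a b i h
    have h2 : ((combine a b i : Fin (p' + q')) : ℕ) < p' := by
      rw [h1]; exact (a _).2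
    show ((combine c d (combine a b i) : Fin (p'' + q'')) : ℕ) = _
    rw [combine_val_lt c d _ h2, combine_val_lt (c.comp a) (d.comp b) i h]
    show ((c ⟨_, h2⟩ : Fin p'') : ℕ) = ((c (a ⟨(i:ℕ), h⟩) : Fin p'') : ℕ)
    exact congrArg (fun z => ((c z : Fin p'') : ℕ)) (Fin.ext h1)
  · have h1 := combine_val_ge a b i h
    have h2 : ¬ ((combine a b i : Fin (p' + q')) : ℕ) < p' := by rw [h1]; omega
    show ((combine c d (combine a b i) : Fin (p'' + q'')) : ℕ) = _
    rw [combine_val_ge c d _ h2, combine_val_ge (c.comp a) (d.comp b) i h]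
    show p'' + ((d ⟨_, _⟩ : Fin q'') : ℕ) = p'' + ((d (b ⟨(i:ℕ) - p, _⟩) : Fin q'') : ℕ)
    refine congrArg (fun z => p'' + ((d z : Fin q'') : ℕ)) (Fin.ext ?_)
    show ((combine a b i : Fin (p'+q')) : ℕ) - p' = ((b ⟨(i:ℕ) - p, _⟩ : Fin q') : ℕ)
    rw [h1]; omega

set_option maxHeartbeats 4000000 in
/-- The functor `K`. -/
def Kfun (D : A → Subcat C) [LinearOrder A] : GrCechObj D ⥤ GrCechObj D where
  obj X := appendObj X (sort X.idx)
  map {X Y} F :=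
    { φ := combine (p := Y.n + 1) (q := Y.n + 1) (r := X.n + 1) (s := X.n + 1)
        F.φ (sortMap (X := X) (Y := Y) F)
      idx_eq := fun j => by
        refine Fin.addCases (motive := fun j : Fin (Y.n+1+(Y.n+1)) =>
          (appendObj Y (sort Y.idx)).idx j
          = (appendObj X (sort X.idx)).idx (combine F.φ (sortMap F) j)) ?_ ?_ j
        · intro i
          show (Fin.append Y.idx (Y.idx ∘ sort Y.idx) : Fin (Y.n+1+(Y.n+1)) → A)
              (Fin.castAdd (Y.n+1) i)
            = (Fin.append X.idx (X.idx ∘ sort X.idx) : Fin (X.n+1+(X.n+1)) → A)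
              (combine F.φ (sortMap F) (Fin.castAdd (Y.n+1) i))
          rw [Fin.append_left, combine_castAdd, Fin.append_left]; exact F.idx_eq i
        · intro i
          show (Fin.append Y.idx (Y.idx ∘ sort Y.idx) : Fin (Y.n+1+(Y.n+1)) → A)
              (Fin.natAdd (Y.n+1) i)
            = (Fin.append X.idx (X.idx ∘ sort X.idx) : Fin (X.n+1+(X.n+1)) → A)
              (combine F.φ (sortMap F) (Fin.natAdd (Y.n+1) i))
          rw [Fin.append_right, combine_natAdd, Fin.append_right]
          show Y.idx (sort Y.idx i)
            = X.idx (sort X.idx ((sort X.idx).symm (F.φ (sort Y.idx i))))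
          rw [Equiv.apply_symm_apply]; exact F.idx_eq _
      f := F.f
      mem := fun j => by
        refine Fin.addCases (motive := fun j : Fin (Y.n+1+(Y.n+1)) =>
          F.f ∈ (D ((appendObj Y (sort Y.idx)).idx j)).homs X.pt Y.pt) ?_ ?_ j
        · intro i
          show F.f ∈ (D ((Fin.append Y.idx (Y.idx ∘ sort Y.idx) :
            Fin (Y.n+1+(Y.n+1)) → A) (Fin.castAdd (Y.n+1) i))).homs X.pt Y.pt
          rw [Fin.append_left]; exact F.mem i
        · intro i
          show F.f ∈ (D ((Fin.append Y.idx (Y.idx ∘ sort Y.idx) :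
            Fin (Y.n+1+(Y.n+1)) → A) (Fin.natAdd (Y.n+1) i))).homs X.pt Y.pt
          rw [Fin.append_right]; exact F.mem (sort Y.idx i) }
  map_id X := GrCechHom.ext' (by
    show combine (𝟙 X : X ⟶ X).φ (sortMap (𝟙 X)) = OrderHom.id
    rw [show (𝟙 X : X ⟶ X).φ = OrderHom.id from rfl, sortMap_id]
    exact combine_id) (by exact rfl)
  map_comp {X Y Z} F G := GrCechHom.ext' (by
    show combine (F ≫ G).φ (sortMap (F ≫ G))
      = (combine F.φ (sortMap F)).comp (combine G.φ (sortMap G))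
    rw [show (F ≫ G).φ = F.φ.comp G.φ from rfl, sortMap_comp, combine_comp])
    (by exact rfl)

set_option maxHeartbeats 1000000 in
/-- The natural transformation `t : K ⟶ J ⋙ I`. -/
def tTrans (D : A → Subcat C) [LinearOrder A] :
    Kfun D ⟶ Jfun D ⋙ ordIncl D (· ≤ ·) where
  app X :=
    { φ := ⟨fun j => Fin.natAdd (X.n + 1) j, fun i j hij => Nat.add_le_add_left hij _⟩
      idx_eq := fun (j : Fin (X.n + 1)) => by
        show X.idx (sort X.idx j)
          = (Fin.append X.idx (X.idx ∘ sort X.idx) : Fin (X.n+1+(X.n+1)) → A)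
              (Fin.natAdd (X.n+1) j)
        rw [Fin.append_right]; rfl
      f := 𝟙 X.pt
      mem := fun j => (D _).id_mem _ (X.mem (sort X.idx j)) }
  naturality {X Y} F := hom_ext_val (fun (j : Fin (Y.n + 1)) => by
    show ((combine F.φ (sortMap (X := X) (Y := Y) F)
        (Fin.natAdd (Y.n+1) j) : Fin (X.n+1+(X.n+1))) : ℕ)
      = ((Fin.natAdd (X.n+1) (sortMap (X := X) (Y := Y) F j) : Fin (X.n+1+(X.n+1))) : ℕ)
    rw [combine_natAdd]) (by exact (Category.comp_id _).trans (Category.id_comp _).symm)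

set_option maxHeartbeats 1000000 in
/-- The natural transformation `s : K ⟶ 𝟭`. -/
def sTrans (D : A → Subcat C) [LinearOrder A] :
    Kfun D ⟶ 𝟭 (GrCechObj D) where
  app X :=
    { φ := ⟨fun j => Fin.castAdd (X.n + 1) j, fun i j hij => hij⟩
      idx_eq := fun j => by
        show X.idx j
          = (Fin.append X.idx (X.idx ∘ sort X.idx) : Fin (X.n+1+(X.n+1)) → A)
              (Fin.castAdd (X.n+1) j)
        rw [Fin.append_left]
      f := 𝟙 X.pt
      mem := fun j => (D _).id_mem _ (X.mem j) }
  naturality {X Y} F := hom_ext_val (fun j => by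
    show ((combine F.φ (sortMap (X := X) (Y := Y) F)
        (Fin.castAdd (Y.n+1) j) : Fin (X.n+1+(X.n+1))) : ℕ)
      = ((Fin.castAdd (X.n+1) (F.φ j) : Fin (X.n+1+(X.n+1))) : ℕ)
    rw [combine_castAdd]) (by exact (Category.comp_id _).trans (Category.id_comp _).symm)

set_option maxHeartbeats 4000000 in
lemma JI_eq_id (D : A → Subcat C) [LinearOrder A] :
    ordIncl D (· ≤ ·) ⋙ Jfun D = 𝟭 (GrCechOrd D (· ≤ ·)) := by
  have hobj : ∀ X : GrCechOrd D (· ≤ ·),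
      (ordIncl D (· ≤ ·) ⋙ Jfun D).obj X = X := by
    intro X
    have hm : Monotone X.obj.idx := fun i j h => X.property i j h
    have hs : sort X.obj.idx = Equiv.refl _ := Tuple.sort_eq_refl_iff_monotone.mpr hm
    apply ObjectProperty.FullSubcategory.ext
    show sortObj X.obj (sort X.obj.idx) = X.obj
    rw [hs]
    cases X.obj
    rfl
  refine CategoryTheory.Functor.ext hobj ?_
  intro X Y f
  have hmY : Monotone Y.obj.idx := fun i j h => Y.property i j h
  have hsY : sort Y.obj.idx = Equiv.refl _ := Tuple.sort_eq_refl_iff_monotone.mpr hmY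
  have hmX : Monotone X.obj.idx := fun i j h => X.property i j h
  have hsX : sort X.obj.idx = Equiv.refl _ := Tuple.sort_eq_refl_iff_monotone.mpr hmX
  apply ObjectProperty.hom_ext
  refine hom_ext_val (fun j => ?_) ?_
  · have e1 : (((f ≫ eqToHom (hobj Y).symm).hom.φ j : Fin (X.obj.n + 1)) : ℕ)
        = ((f.hom.φ ⟨(j : ℕ), j.2⟩ : Fin (X.obj.n + 1)) : ℕ) := by
      show ((f.hom.φ ((eqToHom (hobj Y).symm : Y ⟶ _).hom.φ j) : Fin (X.obj.n + 1)) : ℕ) = _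
      exact congrArg (fun z => ((f.hom.φ z : Fin (X.obj.n + 1)) : ℕ))
        (Fin.ext (eqToHom_φ_val_ord _ j))
    have e2 : (((eqToHom (hobj X) ≫ f ≫ eqToHom (hobj Y).symm).hom.φ j :
        Fin (X.obj.n + 1)) : ℕ) = ((f.hom.φ ⟨(j : ℕ), j.2⟩ : Fin (X.obj.n + 1)) : ℕ) := by
      show (((eqToHom (hobj X) : _ ⟶ X).hom.φ ((f ≫ eqToHom (hobj Y).symm).hom.φ j) :
        Fin (X.obj.n + 1)) : ℕ) = _
      rw [eqToHom_φ_val_ord, e1]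
    refine Eq.trans ?_ e2.symm
    show (((sort X.obj.idx).symm (f.hom.φ (sort Y.obj.idx j)) : Fin (X.obj.n + 1)) : ℕ) = _
    rw [hsX, hsY]
    rfl
  · show f.hom.f = (eqToHom (hobj X) ≫ f ≫ eqToHom (hobj Y).symm).hom.f
    have hc : (eqToHom (hobj X) ≫ f ≫ eqToHom (hobj Y).symm).hom.f
        = (eqToHom (hobj X) : _ ⟶ X).hom.f ≫ f.hom.f ≫ (eqToHom (hobj Y).symm : Y ⟶ _).hom.f := rfl
    rw [hc, eqToHom_f_ord, eqToHom_f_ord,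
      show congrArg (fun Z : GrCechOrd D (· ≤ ·) => Z.obj.pt) (hobj X) = rfl from rfl,
      show congrArg (fun Z : GrCechOrd D (· ≤ ·) => Z.obj.pt) (hobj Y).symm = rfl from rfl]
    exact ((Category.id_comp _).trans (Category.comp_id _)).symm

end CechCover




/-- For a cover `D` of a small category `C` indexed by a totally ordered set, with
`I : Gr(Č^o(D)) ⥤ Gr(Č(D))` the inclusion, there are functors
`J : Gr(Č(D)) ⥤ Gr(Č^o(D))` and `K : Gr(Č(D)) ⥤ Gr(Č(D))` with `J ∘ I = id`, and
natural transformations `t : K ⟹ I ∘ J` and `s : K ⟹ id`; here `J` sends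
`x_{a_0…a_n}` to `x_{a_{σ(0)}…a_{σ(n)}}` where `σ` is the stable sorting permutation
of the index tuple (monotone reordering preserving the original order of equal
indices), and `K` sends `x_{a_0…a_n}` to `x_{a_0…a_n a_{σ(0)}…a_{σ(n)}}`. -/
theorem ordered_cech_nerve_retraction
    {C : Type} [SmallCategory C] {A : Type} [LinearOrder A] (D : A → Subcat C)
    (hcover : IsCover D) :
    ∃ (J : GrCechObj D ⥤ GrCechOrd D (· ≤ ·)) (K : GrCechObj D ⥤ GrCechObj D),
      ordIncl D (· ≤ ·) ⋙ J = 𝟭 (GrCechOrd D (· ≤ ·)) ∧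
      Nonempty (K ⟶ J ⋙ ordIncl D (· ≤ ·)) ∧
      Nonempty (K ⟶ 𝟭 (GrCechObj D)) ∧
      ∀ X : GrCechObj D, ∃ σ : Equiv.Perm (Fin (X.n + 1)),
        Monotone (X.idx ∘ σ) ∧
        (∀ p q : Fin (X.n + 1), p < q → X.idx (σ p) = X.idx (σ q) → σ p < σ q) ∧
        (J.obj X).obj = sortObj X σ ∧
        K.obj X = appendObj X σ := by
  refine ⟨Jfun D, Kfun D, JI_eq_id D, ⟨tTrans D⟩, ⟨sTrans D⟩, fun X => ?_⟩
  exact ⟨Tuple.sort X.idx, Tuple.monotone_sort _,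
    ((Tuple.eq_sort_iff (f := X.idx) (σ := Tuple.sort X.idx)).mp rfl).2, rfl, rfl⟩
end

section
/- Let D = {D_a}_{a ∈ A} be a cover of a small category C, and suppose the index set A is equipped with two total orders ≤₁ and ≤₂. Let Č^o(D)_1 and Č^o(D)_2 denote the ordered Čech nerves formed with respect to ≤₁ and ≤₂ respectively. Then the Grothendieck constructions Gr(Č^o(D)_1) and Gr(Č^o(D)_2) are isomorphic as categories. -/
open CategoryTheory

namespace CechCover

variable {C : Type} [SmallCategory C] {A : Type}

section SortAux

variable {C : Type} [SmallCategory C] {A : Type}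

/-- `Tuple.sort` with an explicit linear order. -/
noncomputable def tsort (L : LinearOrder A) {n : ℕ} (a : Fin n → A) : Equiv.Perm (Fin n) :=
  letI := L; Tuple.sort a

lemma tsort_mono (L : LinearOrder A) {n : ℕ} (a : Fin n → A) {i j : Fin n} (h : i ≤ j) :
    L.le (a (tsort L a i)) (a (tsort L a j)) := by
  letI := L; exact Tuple.monotone_sort a h

lemma tsort_stab (L : LinearOrder A) {n : ℕ} (a : Fin n → A) {i j : Fin n} (h : i < j)
    (he : a (tsort L a i) = a (tsort L a j)) : tsort L a i < tsort L a j := by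
  letI := L
  exact ((Tuple.eq_sort_iff (σ := Tuple.sort a) (f := a)).mp rfl).2 i j h he

lemma tsort_symm_le (L : LinearOrder A) {n : ℕ} (a : Fin n → A) {p q : Fin n} (hpq : p ≤ q)
    (he : a p = a q) : (tsort L a).symm p ≤ (tsort L a).symm q := by
  rcases lt_trichotomy ((tsort L a).symm p) ((tsort L a).symm q) with h | h | h
  · exact h.le
  · exact h.le
  · have := tsort_stab L a h (by
      simp only [Equiv.apply_symm_apply]; exact he.symm)
    simp only [Equiv.apply_symm_apply] at this
    exact absurd hpq (not_le.mpr this)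

lemma tsort_symm_lt (L : LinearOrder A) {n : ℕ} (a : Fin n → A) {p q : Fin n}
    (h : L.lt (a p) (a q)) : (tsort L a).symm p < (tsort L a).symm q := by
  letI := L
  rcases lt_trichotomy ((tsort L a).symm p) ((tsort L a).symm q) with h' | h' | h'
  · exact h'
  · exact absurd h (by rw [show p = q from by simpa using congrArg (tsort L a) h']; exact lt_irrefl _)
  · have := tsort_mono L a h'.le
    simp only [Equiv.apply_symm_apply] at this
    exact absurd h (not_lt.mpr this)

lemma tsort_of_sorted (L₁ L₂ : LinearOrder A) {n : ℕ} (a : Fin n → A)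
    (ha : ∀ i j : Fin n, i ≤ j → L₁.le (a i) (a j)) :
    tsort L₁ (a ∘ (tsort L₂ a)) = (tsort L₂ a).symm := by
  letI := L₁
  symm
  rw [show tsort L₁ (a ∘ (tsort L₂ a)) = Tuple.sort (a ∘ (tsort L₂ a)) from rfl,
    Tuple.eq_sort_iff]
  constructor
  · intro i j hij
    simpa using ha i j hij
  · intro i j hij he
    simp only [Function.comp_apply, Equiv.apply_symm_apply] at he
    rcases lt_trichotomy ((tsort L₂ a).symm i) ((tsort L₂ a).symm j) with h | h | h
    · exact h
    · exact absurd (by simpa using congrArg (tsort L₂ a) h : i = j) hij.ne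
    · have := tsort_stab L₂ a h (by simp only [Equiv.apply_symm_apply]; exact he.symm)
      simp only [Equiv.apply_symm_apply] at this
      exact absurd hij (lt_asymm this)

variable (D : A → Subcat C)

lemma GrCechObj.ext'' {X Y : GrCechObj D} (hn : X.n = Y.n) (hidx : HEq X.idx Y.idx)
    (hpt : X.pt = Y.pt) : X = Y := by
  cases X; cases Y
  cases hn; cases hidx; cases hpt
  rfl

lemma hom_heq {le : A → A → Prop} {X X' Y Y' : GrCechOrd D le} (hX : X = X') (hY : Y = Y')
    (f : X ⟶ Y) (f' : X' ⟶ Y')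
    (hφ : HEq (GrCechHom.φ (D := D) f.hom) (GrCechHom.φ (D := D) f'.hom))
    (hf : HEq (GrCechHom.f (D := D) f.hom) (GrCechHom.f (D := D) f'.hom)) : HEq f f' := by
  subst hX; subst hY
  exact heq_of_eq (InducedCategory.hom_ext (GrCechHom.ext' (eq_of_heq hφ) (eq_of_heq hf)))

set_option maxHeartbeats 1000000 in
/-- The re-sorting functor between the two ordered Čech nerve Grothendieck constructions. -/
noncomputable def sortFun (L₁ L₂ : LinearOrder A) :
    GrCechOrd D L₁.le ⥤ GrCechOrd D L₂.le where
  obj X := ⟨⟨X.obj.n, X.obj.idx ∘ tsort L₂ X.obj.idx, X.obj.pt,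
      fun i => X.obj.mem (tsort L₂ X.obj.idx i)⟩,
    fun i j hij => tsort_mono L₂ X.obj.idx hij⟩
  map {X Y} F :=
    { hom :=
    { φ := ⟨fun j => (tsort L₂ X.obj.idx).symm (F.hom.φ (tsort L₂ Y.obj.idx j)), by
        intro i j hij
        rcases eq_or_lt_of_le hij with rfl | hlt
        · exact le_refl _
        have h1 := tsort_mono L₂ Y.obj.idx hij
        by_cases he : Y.obj.idx (tsort L₂ Y.obj.idx i) = Y.obj.idx (tsort L₂ Y.obj.idx j)
        · have hσ := tsort_stab L₂ Y.obj.idx hlt he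
          have hφ : F.hom.φ (tsort L₂ Y.obj.idx i) ≤ F.hom.φ (tsort L₂ Y.obj.idx j) := F.hom.φ.mono hσ.le
          exact tsort_symm_le L₂ X.obj.idx hφ
            (by rw [← F.hom.idx_eq, ← F.hom.idx_eq]; exact he)
        · letI := L₂
          have hlt2 : L₂.lt (X.obj.idx (F.hom.φ (tsort L₂ Y.obj.idx i)))
              (X.obj.idx (F.hom.φ (tsort L₂ Y.obj.idx j))) := by
            rw [← F.hom.idx_eq, ← F.hom.idx_eq]
            exact lt_of_le_of_ne h1 he
          exact (tsort_symm_lt L₂ X.obj.idx hlt2).le⟩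
      idx_eq := fun j => by
        simp only [Function.comp_apply, OrderHom.coe_mk, Equiv.apply_symm_apply]
        exact (F.hom.idx_eq (tsort L₂ Y.obj.idx j)).trans
          (congrArg X.obj.idx (Equiv.apply_symm_apply (tsort L₂ X.obj.idx) _).symm)
      f := F.hom.f
      mem := fun j => F.hom.mem (tsort L₂ Y.obj.idx j) } }
  map_id X := InducedCategory.hom_ext (GrCechHom.ext' (by
    ext j
    exact congrArg Fin.val (Equiv.symm_apply_apply (tsort L₂ X.obj.idx) j)) rfl)
  map_comp {X Y Z} F G := InducedCategory.hom_ext (GrCechHom.ext' (by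
    ext j
    have h : F.hom.φ (tsort L₂ Y.obj.idx ((tsort L₂ Y.obj.idx).symm (G.hom.φ (tsort L₂ Z.obj.idx j))))
        = F.hom.φ (G.hom.φ (tsort L₂ Z.obj.idx j)) := by rw [Equiv.apply_symm_apply]
    exact congrArg (fun p => ((tsort L₂ X.obj.idx).symm p : ℕ)) h.symm) (by rfl))

lemma sortFun_comp (L₁ L₂ : LinearOrder A) :
    sortFun D L₁ L₂ ⋙ sortFun D L₂ L₁ = 𝟭 (GrCechOrd D L₁.le) := by
  have hobj : ∀ X : GrCechOrd D L₁.le, (sortFun D L₁ L₂ ⋙ sortFun D L₂ L₁).obj X = X := by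
    intro X
    have hs := tsort_of_sorted L₁ L₂ X.obj.idx X.property
    apply ObjectProperty.FullSubcategory.ext
    refine GrCechObj.ext'' D rfl ?_ rfl
    show HEq ((X.obj.idx ∘ tsort L₂ X.obj.idx) ∘ tsort L₁ (X.obj.idx ∘ tsort L₂ X.obj.idx))
      X.obj.idx
    rw [hs]
    apply heq_of_eq
    funext i
    simp
  apply Functor.hext hobj
  intro X Y f
  apply hom_heq D (hobj X) (hobj Y)
  · apply heq_of_eq
    refine OrderHom.ext _ _ (funext fun j => ?_)
    show (tsort L₁ (X.obj.idx ∘ tsort L₂ X.obj.idx)).symm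
      ((tsort L₂ X.obj.idx).symm (f.hom.φ (tsort L₂ Y.obj.idx
        (tsort L₁ (Y.obj.idx ∘ tsort L₂ Y.obj.idx) j)))) = f.hom.φ j
    rw [tsort_of_sorted L₁ L₂ X.obj.idx X.property,
      tsort_of_sorted L₁ L₂ Y.obj.idx Y.property]
    simp
    exact congrArg _ (Equiv.apply_symm_apply _ _)
  · exact HEq.refl f.hom.f

end SortAux

/-- Build a `LinearOrder` from `IsLinearOrder`. -/
noncomputable def mkLO {A : Type} (r : A → A → Prop) (h : IsLinearOrder A r) : LinearOrder A where
  le := r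
  le_refl := h.toIsPartialOrder.toIsPreorder.toRefl.refl
  le_trans a b c := h.toIsPartialOrder.toIsPreorder.toIsTrans.trans a b c
  le_antisymm a b := h.toIsPartialOrder.toAntisymm.antisymm a b
  le_total := h.toTotal.total
  toDecidableLE := Classical.decRel r

end CechCover

open CechCover

/-- For a cover `D` of a small category `C` whose index set carries two total orders
`r₁` and `r₂`, the Grothendieck constructions of the two associated ordered Čech
nerves are isomorphic as categories. -/
theorem ordered_cech_nerve_independent_of_order
    {C : Type} [SmallCategory C] {A : Type} (D : A → Subcat C) (hcover : IsCover D)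
    (r₁ r₂ : A → A → Prop) (hr₁ : IsLinearOrder A r₁) (hr₂ : IsLinearOrder A r₂) :
    ∃ (F : GrCechOrd D r₁ ⥤ GrCechOrd D r₂) (G : GrCechOrd D r₂ ⥤ GrCechOrd D r₁),
      F ⋙ G = 𝟭 (GrCechOrd D r₁) ∧ G ⋙ F = 𝟭 (GrCechOrd D r₂) := by
  exact ⟨sortFun D (mkLO r₁ hr₁) (mkLO r₂ hr₂), sortFun D (mkLO r₂ hr₂) (mkLO r₁ hr₁),
    sortFun_comp D (mkLO r₁ hr₁) (mkLO r₂ hr₂), sortFun_comp D (mkLO r₂ hr₂) (mkLO r₁ hr₁)⟩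
end

section
/- Let D = {D_a}_{a ∈ A} be a cover of a small category C, indexed by a totally ordered set A. Then the inclusion functor L : Gr(Č^o(D̃)) → Gr(Č^o(D)) from the Grothendieck construction of the reduced Čech nerve to that of the ordered Čech nerve has a right adjoint, namely the reduction functor R which sends an object x_{a_0…a_n} to the object x_{α_0…α_{n'}} obtained by removing duplicate indices. -/
open CategoryTheory

namespace CechCover

variable {C : Type} [SmallCategory C] {A : Type}

/-- The Grothendieck construction `Gr(Č^o(D̃))` of the reduced Čech nerve, with respect
to a total order on the index set with strict order `lt`: the full subcategory of
`Gr(Č(D))` on the objects with strictly increasing index tuple.  (Between two objects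
with pairwise distinct indices, the index maps `φ` of morphisms of `Gr(Č(D))` are
automatically injective, so this agrees with the Grothendieck construction over
`Δ_inj`.) -/
abbrev GrCechRed (D : A → Subcat C) (lt : A → A → Prop) : Type :=
  ObjectProperty.FullSubcategory (fun X : GrCechObj D => ∀ i j : Fin (X.n + 1), i < j → lt (X.idx i) (X.idx j))

/-- The inclusion functor `Gr(Č^o(D̃)) ⥤ Gr(Č(D))`. -/
def redIncl (D : A → Subcat C) (lt : A → A → Prop) : GrCechRed D lt ⥤ GrCechObj D :=
  ObjectProperty.ι _

/-- The inclusion functor `L : Gr(Č^o(D̃)) ⥤ Gr(Č^o(D))`. -/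
def redToOrd (D : A → Subcat C) [LinearOrder A] :
    GrCechRed D (· < ·) ⥤ GrCechOrd D (· ≤ ·) :=
  ObjectProperty.ιOfLE (fun X hX i j hij => by
    rcases lt_or_eq_of_le hij with h | h
    · exact le_of_lt (hX i j h)
    · exact le_of_eq (by rw [h]))

end CechCover

open CechCover

namespace CechCover

variable {C : Type} [SmallCategory C] {A : Type} [LinearOrder A] (D : A → Subcat C)

theorem GrCechHom.ext_f {D : A → Subcat C} {X Y : GrCechObj D}
    (hinj : Function.Injective X.idx) {F G : GrCechHom D X Y} (h : F.f = G.f) : F = G := by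
  refine GrCechHom.ext' ?_ h
  apply OrderHom.ext; funext j
  exact hinj (by rw [← F.idx_eq j, ← G.idx_eq j])

noncomputable section

/-- The finset of indices of an object of the ordered Čech nerve. -/
def idxSet (Y : GrCechOrd D (· ≤ ·)) : Finset A := Finset.image Y.obj.idx Finset.univ

lemma idxSet_card (Y : GrCechOrd D (· ≤ ·)) :
    (idxSet D Y).card = ((idxSet D Y).card - 1) + 1 :=
  (Nat.succ_pred_eq_of_pos (Finset.card_pos.mpr
    ⟨Y.obj.idx 0, Finset.mem_image_of_mem _ (Finset.mem_univ _)⟩)).symm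

/-- Number of distinct indices, minus one. -/
def redN (Y : GrCechOrd D (· ≤ ·)) : ℕ := (idxSet D Y).card - 1

/-- The strictly increasing enumeration of the distinct indices. -/
def redIso (Y : GrCechOrd D (· ≤ ·)) : Fin (redN D Y + 1) ≃o (idxSet D Y) :=
  (idxSet D Y).orderIsoOfFin (idxSet_card D Y)

/-- The reduced index tuple. -/
def ridx (Y : GrCechOrd D (· ≤ ·)) (j : Fin (redN D Y + 1)) : A := (redIso D Y j : A)

lemma ridx_strictMono (Y : GrCechOrd D (· ≤ ·)) : StrictMono (ridx D Y) :=
  fun _ _ h => Subtype.coe_lt_coe.mpr ((redIso D Y).strictMono h)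

lemma ridx_exists (Y : GrCechOrd D (· ≤ ·)) (j : Fin (redN D Y + 1)) :
    ∃ k, Y.obj.idx k = ridx D Y j := by
  obtain ⟨k, -, hk⟩ := Finset.mem_image.mp (redIso D Y j).2
  exact ⟨k, hk⟩

/-- A chosen preimage of each reduced index under the original tuple. -/
def sec (Y : GrCechOrd D (· ≤ ·)) (j : Fin (redN D Y + 1)) : Fin (Y.obj.n + 1) :=
  (ridx_exists D Y j).choose

lemma sec_spec (Y : GrCechOrd D (· ≤ ·)) (j : Fin (redN D Y + 1)) :
    Y.obj.idx (sec D Y j) = ridx D Y j :=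
  (ridx_exists D Y j).choose_spec

lemma idx_mem_idxSet (Y : GrCechOrd D (· ≤ ·)) (i : Fin (Y.obj.n + 1)) :
    Y.obj.idx i ∈ idxSet D Y := Finset.mem_image_of_mem _ (Finset.mem_univ _)

/-- The position of an index in the reduced tuple. -/
def pos (Y : GrCechOrd D (· ≤ ·)) (i : Fin (Y.obj.n + 1)) : Fin (redN D Y + 1) :=
  (redIso D Y).symm ⟨Y.obj.idx i, idx_mem_idxSet D Y i⟩

lemma ridx_pos (Y : GrCechOrd D (· ≤ ·)) (i : Fin (Y.obj.n + 1)) :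
    ridx D Y (pos D Y i) = Y.obj.idx i := by
  simp [ridx, pos]

/-- The reduced object, as an object of `Gr(Č(D))`. -/
def redObjC (Y : GrCechOrd D (· ≤ ·)) : GrCechObj D where
  n := redN D Y
  idx := ridx D Y
  pt := Y.obj.pt
  mem := fun j => by
    obtain ⟨k, hk⟩ := ridx_exists D Y j
    rw [← hk]; exact Y.obj.mem k

/-- The reduced object. -/
def redObj (Y : GrCechOrd D (· ≤ ·)) : GrCechRed D (· < ·) :=
  ⟨redObjC D Y, fun _ _ h => ridx_strictMono D Y h⟩

lemma ridx_injective (Y : GrCechOrd D (· ≤ ·)) : Function.Injective (ridx D Y) :=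
  (ridx_strictMono D Y).injective

/-- The reduction functor. -/
def redFun : GrCechOrd D (· ≤ ·) ⥤ GrCechRed D (· < ·) where
  obj := redObj D
  map {X Y} F :=
    ⟨{φ := ⟨fun j => pos D X (F.hom.φ (sec D Y j)), by
        have key : ∀ j, ridx D X (pos D X (F.hom.φ (sec D Y j))) = ridx D Y j := fun j => by
          rw [ridx_pos, ← F.hom.idx_eq, sec_spec]
        intro (j : Fin (redN D Y + 1)) (j' : Fin (redN D Y + 1)) h
        refine ((ridx_strictMono D X).le_iff_le).mp ?_
        simp only [key]
        exact (ridx_strictMono D Y).monotone h⟩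
      idx_eq := fun (j : Fin (redN D Y + 1)) => by
        show ridx D Y j = ridx D X (pos D X (F.hom.φ (sec D Y j)))
        rw [ridx_pos, ← F.hom.idx_eq, sec_spec]
      f := F.hom.f
      mem := fun j => by
        show F.hom.f ∈ (D (ridx D Y j)).homs X.obj.pt Y.obj.pt
        rw [← sec_spec D Y j]
        exact F.hom.mem _ }⟩
  map_id X := InducedCategory.hom_ext (GrCechHom.ext_f (ridx_injective D X) rfl)
  map_comp F G := InducedCategory.hom_ext (GrCechHom.ext_f (ridx_injective D _) rfl)

lemma strictMono_of_red (X : GrCechRed D (· < ·)) : StrictMono X.obj.idx :=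
  fun _ _ h => X.property _ _ h

/-- The adjunction `redToOrd ⊣ redFun`. -/
def redAdj : redToOrd D ⊣ redFun D :=
  Adjunction.mkOfHomEquiv
    { homEquiv := fun X Y =>
        { toFun := fun F =>
            ⟨{φ := ⟨fun j => F.hom.φ (sec D Y j), by
                have key : ∀ j, X.obj.idx (F.hom.φ (sec D Y j)) = ridx D Y j := fun j =>
                  (F.hom.idx_eq (sec D Y j)).symm.trans (sec_spec D Y j)
                intro (j : Fin (redN D Y + 1)) (j' : Fin (redN D Y + 1)) h
                refine ((strictMono_of_red D X).le_iff_le).mp ?_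
                simp only [key]
                exact (ridx_strictMono D Y).monotone h⟩
              idx_eq := fun j =>
                ((F.hom.idx_eq (sec D Y j)).symm.trans (sec_spec D Y j)).symm
              f := F.hom.f
              mem := fun j => by
                show F.hom.f ∈ (D (ridx D Y j)).homs X.obj.pt Y.obj.pt
                rw [← sec_spec D Y j]
                exact F.hom.mem _ }⟩
          invFun := fun G =>
            ⟨{φ := ⟨fun i => G.hom.φ (pos D Y i), by
                have key : ∀ i, X.obj.idx (G.hom.φ (pos D Y i)) = Y.obj.idx i := fun i =>
                  (G.hom.idx_eq (pos D Y i)).symm.trans (ridx_pos D Y i)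
                intro i i' h
                refine ((strictMono_of_red D X).le_iff_le).mp ?_
                rw [key, key]
                exact Y.property _ _ h⟩
              idx_eq := fun i =>
                ((G.hom.idx_eq (pos D Y i)).symm.trans (ridx_pos D Y i)).symm
              f := G.hom.f
              mem := fun i => by
                show G.hom.f ∈ (D (Y.obj.idx i)).homs X.obj.pt Y.obj.pt
                rw [← ridx_pos D Y i]
                exact G.hom.mem _ }⟩
          left_inv := fun F => InducedCategory.hom_ext (GrCechHom.ext_f ((strictMono_of_red D X).injective) rfl)
          right_inv := fun G => InducedCategory.hom_ext (GrCechHom.ext_f ((strictMono_of_red D X).injective) rfl) }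
      homEquiv_naturality_left_symm := fun {X' X Y} f g =>
        InducedCategory.hom_ext (GrCechHom.ext_f ((strictMono_of_red D X').injective) rfl)
      homEquiv_naturality_right := fun {X Y Y'} f g =>
        InducedCategory.hom_ext (GrCechHom.ext_f ((strictMono_of_red D X).injective) rfl) }

lemma range_ridx (Y : GrCechOrd D (· ≤ ·)) :
    Set.range (ridx D Y) = Set.range Y.obj.idx := by
  ext a
  constructor
  · rintro ⟨j, rfl⟩
    exact ridx_exists D Y j
  · rintro ⟨i, rfl⟩
    exact ⟨pos D Y i, ridx_pos D Y i⟩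

end

end CechCover


/-- For a cover `D` of a small category `C` indexed by a totally ordered set, the
inclusion functor `L : Gr(Č^o(D̃)) ⥤ Gr(Č^o(D))` of the reduced Čech nerve into the
ordered Čech nerve has a right adjoint, namely the reduction functor `R` sending an
object `x_{a_0…a_n}` to the object obtained by removing duplicate indices (same
underlying object of `C`, same set of indices, strictly increasing index tuple). -/
theorem reduced_cech_nerve_inclusion_right_adjoint
    {C : Type} [SmallCategory C] {A : Type} [LinearOrder A] (D : A → Subcat C)
    (hcover : IsCover D) :
    ∃ R : GrCechOrd D (· ≤ ·) ⥤ GrCechRed D (· < ·),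
      Nonempty (redToOrd D ⊣ R) ∧
      ∀ Y : GrCechOrd D (· ≤ ·),
        (R.obj Y).obj.pt = Y.obj.pt ∧
        Set.range (R.obj Y).obj.idx = Set.range Y.obj.idx := by
  refine ⟨redFun D, ⟨redAdj D⟩, fun Y => ⟨rfl, ?_⟩⟩
  exact range_ridx D Y
end

section
/- Let D = {D_a}_{a ∈ A} be a locally finite cover of a small category C, indexed by a totally ordered set A, such that every D_a is an ideal of C. Then the natural functor ρ̃ : Gr(Č^o(D̃)) → C from the Grothendieck construction of the reduced Čech nerve has a left adjoint, namely the functor π : C → Gr(Č^o(D̃)) sending an object x to x_{a_0…a_n}, where a_0 < … < a_n are exactly the indices a ∈ A with x ∈ ob(D_a). -/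
open CategoryTheory

namespace CechCover

variable {C : Type} [SmallCategory C] {A : Type}

/-- A cover is locally finite if every object belongs to only finitely many of the
subcategories. -/
def IsLocallyFinite (D : A → Subcat C) : Prop :=
  ∀ x : C, {a : A | x ∈ (D a).objs}.Finite

end CechCover

open CechCover

namespace CechProof

variable {C : Type} [SmallCategory C] {A : Type} [LinearOrder A]

theorem hom_ext' {D : A → Subcat C} {X Y : GrCechObj D}
    (hX : Function.Injective X.idx)
    {F G : GrCechHom D X Y} (h : F.f = G.f) : F = G := by
  refine GrCechHom.ext' ?_ h
  refine OrderHom.ext _ _ (funext fun j => ?_)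
  exact hX ((F.idx_eq j).symm.trans (G.idx_eq j))

theorem red_strictMono {D : A → Subcat C} (X : GrCechRed D (· < ·)) :
    StrictMono X.obj.idx := fun i j h => X.property i j h

theorem red_hom_ext {D : A → Subcat C} {X Y : GrCechRed D (· < ·)}
    {F G : X ⟶ Y} (h : F.hom.f = G.hom.f) : F = G :=
  InducedCategory.hom_ext (hom_ext' (red_strictMono X).injective h)

variable (D : A → Subcat C)

/-- The finite set of indices `a` with `x ∈ ob(D a)`. -/
noncomputable def sfin (hlf : IsLocallyFinite D) (x : C) : Finset A := (hlf x).toFinset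

theorem mem_sfin (hlf : IsLocallyFinite D) (x : C) (a : A) :
    a ∈ sfin D hlf x ↔ x ∈ (D a).objs := Set.Finite.mem_toFinset _

noncomputable def nn (hlf : IsLocallyFinite D) (x : C) : ℕ := (sfin D hlf x).card - 1

theorem card_sfin (hcover : IsCover D) (hlf : IsLocallyFinite D) (x : C) : (sfin D hlf x).card = nn D hlf x + 1 := by
  have h : (sfin D hlf x).Nonempty := by
    obtain ⟨a, ha⟩ := hcover.1 x
    exact ⟨a, (mem_sfin D hlf x a).2 ha⟩
  have := Finset.card_pos.mpr h
  unfold nn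
  omega

/-- Enumeration of the indices of `x` in increasing order. -/
noncomputable def enum (hcover : IsCover D) (hlf : IsLocallyFinite D) (x : C) : Fin (nn D hlf x + 1) ≃o {a // a ∈ sfin D hlf x} :=
  (sfin D hlf x).orderIsoOfFin (card_sfin D hcover hlf x)

theorem obj_mem_of_hom (hideal : ∀ a, (D a).IsIdeal) {x y : C} (f : x ⟶ y) {a : A} (h : y ∈ (D a).objs) :
    x ∈ (D a).objs := (hideal a).2 y x h ⟨f⟩

theorem hom_mem (hideal : ∀ a, (D a).IsIdeal) {x y : C} (f : x ⟶ y) {a : A} (hx : x ∈ (D a).objs)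
    (hy : y ∈ (D a).objs) : f ∈ (D a).homs x y := by
  rw [(hideal a).1 x y hx hy]; trivial

/-- The object `x_{a₀…aₙ}` where `a₀ < ⋯ < aₙ` enumerate the indices of `x`. -/
noncomputable def pobj (hcover : IsCover D) (hlf : IsLocallyFinite D) (hideal : ∀ a, (D a).IsIdeal) (x : C) : GrCechRed D (· < ·) :=
  ⟨{ n := nn D hlf x
     idx := fun i => (enum D hcover hlf x i : A)
     pt := x
     mem := fun i => (mem_sfin D hlf x _).1 (enum D hcover hlf x i).2 },
   fun i j hij => Subtype.coe_lt_coe.2 ((enum D hcover hlf x).strictMono hij)⟩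

/-- The morphism `π x ⟶ Y` induced by `f : x ⟶ Y.pt`. -/
noncomputable def toHom (hcover : IsCover D) (hlf : IsLocallyFinite D) (hideal : ∀ a, (D a).IsIdeal) (x : C) (Y : GrCechRed D (· < ·)) (f : x ⟶ Y.obj.pt) :
    pobj D hcover hlf hideal x ⟶ Y := ⟨{
  φ :=
    { toFun := fun j => (enum D hcover hlf x).symm
        ⟨Y.obj.idx j, (mem_sfin D hlf x _).2
          (obj_mem_of_hom D hideal f (Y.obj.mem j))⟩
      monotone' := fun j j' hjj' =>
        (enum D hcover hlf x).symm.monotone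
          (Subtype.mk_le_mk.2 ((red_strictMono Y).monotone hjj')) }
  idx_eq := fun j => by
    show Y.obj.idx j = ((enum D hcover hlf x) ((enum D hcover hlf x).symm _) : A)
    rw [OrderIso.apply_symm_apply]
  f := f
  mem := fun j => hom_mem D hideal f
    (obj_mem_of_hom D hideal f (Y.obj.mem j)) (Y.obj.mem j) }⟩

/-- The functor `π : C ⥤ Gr(Č^o(D̃))`. -/
noncomputable def pi (hcover : IsCover D) (hlf : IsLocallyFinite D) (hideal : ∀ a, (D a).IsIdeal) : C ⥤ GrCechRed D (· < ·) where
  obj x := pobj D hcover hlf hideal x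
  map {x y} f := toHom D hcover hlf hideal x (pobj D hcover hlf hideal y) f
  map_id _ := red_hom_ext rfl
  map_comp _ _ := red_hom_ext rfl

/-- The adjunction `π ⊣ ρ̃`. -/
noncomputable def adj (hcover : IsCover D) (hlf : IsLocallyFinite D) (hideal : ∀ a, (D a).IsIdeal) : pi D hcover hlf hideal ⊣ redIncl D (· < ·) ⋙ grProj D :=
  Adjunction.mkOfHomEquiv
    { homEquiv := fun x Y =>
        { toFun := fun F => F.hom.f
          invFun := fun f => toHom D hcover hlf hideal x Y f
          left_inv := fun F => red_hom_ext rfl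
          right_inv := fun f => rfl }
      homEquiv_naturality_left_symm := fun f g => red_hom_ext rfl
      homEquiv_naturality_right := fun F g => rfl }

end CechProof

/-- For a locally finite ideal cover `D` of a small category `C` indexed by a totally
ordered set, the natural functor `ρ̃ : Gr(Č^o(D̃)) ⥤ C` has a left adjoint, namely the
functor `π` sending an object `x` to `x_{a_0…a_n}`, where `a_0 < … < a_n` are exactly
the indices `a` with `x ∈ ob(D_a)`. -/
theorem reduced_cech_nerve_left_adjoint_of_ideal_cover
    {C : Type} [SmallCategory C] {A : Type} [LinearOrder A] (D : A → Subcat C)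
    (hcover : IsCover D) (hlf : IsLocallyFinite D) (hideal : ∀ a, (D a).IsIdeal) :
    ∃ π : C ⥤ GrCechRed D (· < ·),
      Nonempty (π ⊣ redIncl D (· < ·) ⋙ grProj D) ∧
      ∀ x : C,
        (π.obj x).obj.pt = x ∧
        Set.range (π.obj x).obj.idx = {a : A | x ∈ (D a).objs} := by
  refine ⟨CechProof.pi D hcover hlf hideal,
    ⟨CechProof.adj D hcover hlf hideal⟩, fun x => ⟨rfl, ?_⟩⟩
  ext a
  constructor
  · rintro ⟨i, rfl⟩
    exact (CechProof.mem_sfin D hlf x _).1 (CechProof.enum D hcover hlf x i).2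
  · intro ha
    refine ⟨(CechProof.enum D hcover hlf x).symm
      ⟨a, (CechProof.mem_sfin D hlf x a).2 ha⟩, ?_⟩
    show ((CechProof.enum D hcover hlf x) ((CechProof.enum D hcover hlf x).symm _) : A) = a
    rw [OrderIso.apply_symm_apply]
end

section
/- Let C be a finite category and let D = {D_a}_{a ∈ A} be a cover of C indexed by a totally ordered finite set A, such that every D_a is an ideal of C or every D_a is a filter of C. Suppose that C has Euler characteristic and that each intersection D_{a_0…a_i} (for a_0 < … < a_i in A) has Euler characteristic. Then χ(C) = Σ_{i=0}^{#A−1} Σ_{a_0 < … < a_i} (−1)^i χ(D_{a_0…a_i}). -/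
open CategoryTheory

namespace CechCover

variable {C : Type} [SmallCategory C] {A : Type}

/-- The objects of a full subcategory on `S ⊆ ob C`, as a finset. -/
noncomputable def objFinset [Fintype C] (S : Set C) : Finset C := by
  classical exact Finset.univ.filter (· ∈ S)

/-- A weighting on the full subcategory of a finite category `C` on the set of objects
`S`: a vector `w` with `∑_b ζ(a, b) · w(b) = 1` for every object `a` of `S`, where
`ζ(a, b)` is the number of morphisms `a ⟶ b`. -/
def IsWeighting [Fintype C] [∀ x y : C, Fintype (x ⟶ y)] (S : Set C) (w : C → ℚ) : Prop :=
  ∀ a ∈ S, ∑ b ∈ objFinset S, (Fintype.card (a ⟶ b) : ℚ) * w b = 1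

/-- A coweighting, dually: `∑_a v(a) · ζ(a, b) = 1` for every object `b` of `S`. -/
def IsCoweighting [Fintype C] [∀ x y : C, Fintype (x ⟶ y)] (S : Set C) (v : C → ℚ) : Prop :=
  ∀ b ∈ S, ∑ a ∈ objFinset S, v a * (Fintype.card (a ⟶ b) : ℚ) = 1

/-- A finite (full sub)category has Euler characteristic if it admits both a weighting
and a coweighting. -/
def HasEulerChar [Fintype C] [∀ x y : C, Fintype (x ⟶ y)] (S : Set C) : Prop :=
  (∃ w, IsWeighting S w) ∧ (∃ v, IsCoweighting S v)

/-- The Euler characteristic: the sum of the values of a weighting (this is independent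
of the choice of weighting, and agrees with the sum of the values of any coweighting,
whenever the category has Euler characteristic). -/
noncomputable def eulerChar [Fintype C] [∀ x y : C, Fintype (x ⟶ y)] (S : Set C) : ℚ := by
  classical exact if h : ∃ w, IsWeighting S w then ∑ b ∈ objFinset S, h.choose b else 0

end CechCover

namespace CechCover

variable {C : Type} [SmallCategory C] [Fintype C] [∀ x y : C, Fintype (x ⟶ y)]

lemma mem_objFinset {S : Set C} {x : C} : x ∈ objFinset S ↔ x ∈ S := by
  classical
  simp [objFinset]

lemma sum_weighting_eq_sum_coweighting {S : Set C} {w v : C → ℚ}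
    (hw : IsWeighting S w) (hv : IsCoweighting S v) :
    ∑ b ∈ objFinset S, w b = ∑ a ∈ objFinset S, v a := by
  have h1 : ∑ a ∈ objFinset S, v a
      = ∑ a ∈ objFinset S, v a * (∑ b ∈ objFinset S, (Fintype.card (a ⟶ b) : ℚ) * w b) := by
    refine Finset.sum_congr rfl fun a ha => ?_
    rw [hw a (mem_objFinset.mp ha), mul_one]
  have h2 : ∑ b ∈ objFinset S, w b
      = ∑ b ∈ objFinset S, (∑ a ∈ objFinset S, v a * (Fintype.card (a ⟶ b) : ℚ)) * w b := by
    refine Finset.sum_congr rfl fun b hb => ?_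
    rw [hv b (mem_objFinset.mp hb), one_mul]
  rw [h1, h2]
  simp only [Finset.sum_mul, Finset.mul_sum, mul_assoc]
  rw [Finset.sum_comm]

open scoped Classical in
lemma sum_objFinset (S : Set C) (g : C → ℚ) :
    ∑ x ∈ objFinset S, g x = ∑ x : C, if x ∈ S then g x else 0 := by
  classical
  rw [← Finset.sum_filter]
  refine Finset.sum_congr ?_ fun _ _ => rfl
  ext x; simp [mem_objFinset]

lemma eulerChar_eq_sum_weighting {S : Set C} (hS : HasEulerChar S) {w : C → ℚ}
    (hw : IsWeighting S w) : eulerChar S = ∑ b ∈ objFinset S, w b := by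
  classical
  have hex : ∃ w, IsWeighting S w := ⟨w, hw⟩
  obtain ⟨v, hv⟩ := hS.2
  have h1 := sum_weighting_eq_sum_coweighting hex.choose_spec hv
  have h2 := sum_weighting_eq_sum_coweighting hw hv
  simp only [eulerChar, dif_pos hex]
  rw [h1, ← h2]

lemma eulerChar_eq_sum_coweighting {S : Set C} (hS : HasEulerChar S) {v : C → ℚ}
    (hv : IsCoweighting S v) : eulerChar S = ∑ a ∈ objFinset S, v a := by
  obtain ⟨w, hw⟩ := hS.1
  rw [eulerChar_eq_sum_weighting hS hw, sum_weighting_eq_sum_coweighting hw hv]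

end CechCover

private lemma alt_binom_sum (n : ℕ) (hn : 1 ≤ n) :
    ∑ i ∈ Finset.range n, (-1 : ℚ) ^ i * (n.choose (i + 1) : ℚ) = 1 := by
  have h := Int.alternating_sum_range_choose (n := n)
  rw [if_neg (by omega)] at h
  rw [Finset.sum_range_succ'] at h
  simp only [pow_zero, Nat.choose_zero_right, Nat.cast_one, one_mul] at h
  have h2 : ∑ i ∈ Finset.range n, (-1 : ℤ) ^ i * (n.choose (i + 1) : ℤ) = 1 := by
    have : ∀ i, (-1 : ℤ) ^ (i + 1) * (n.choose (i + 1) : ℤ)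
        = -((-1 : ℤ) ^ i * (n.choose (i + 1) : ℤ)) := by
      intro i; ring
    simp only [this] at h
    rw [Finset.sum_neg_distrib] at h
    linarith
  have := congrArg (fun z : ℤ => (z : ℚ)) h2
  push_cast at this
  exact this

open CechCover

/-- Inclusion-exclusion principle: for an ideal cover or a filter cover
`D = {D_a}_{a ∈ A}` of a finite category `C`, indexed by a totally ordered finite set
`A`, if `C` and each intersection `D_{a_0…a_i}` (for `a_0 < … < a_i`) have Euler
characteristics, then `χ(C) = ∑_{i} ∑_{a_0 < … < a_i} (-1)^i χ(D_{a_0…a_i})` (the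
inner sum being indexed by the subsets of `A` of cardinality `i + 1`). -/
theorem euler_char_inclusion_exclusion
    {C : Type} [SmallCategory C] [Fintype C] [∀ x y : C, Fintype (x ⟶ y)]
    {A : Type} [Fintype A] [LinearOrder A] [DecidableEq A] (D : A → Subcat C)
    (hcover : IsCover D)
    (h : (∀ a, (D a).IsIdeal) ∨ (∀ a, (D a).IsFilter))
    (hC : HasEulerChar (Set.univ : Set C))
    (hD : ∀ s : Finset A, s.Nonempty → HasEulerChar {x : C | ∀ a ∈ s, x ∈ (D a).objs}) :
    eulerChar (Set.univ : Set C) =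
      ∑ i ∈ Finset.range (Fintype.card A),
        ∑ s ∈ Finset.univ.filter (fun s : Finset A => s.card = i + 1),
          (-1 : ℚ) ^ i * eulerChar {x : C | ∀ a ∈ s, x ∈ (D a).objs} := by
  classical
  obtain ⟨f, hfC, hfS⟩ : ∃ f : C → ℚ,
      eulerChar (Set.univ : Set C) = ∑ x ∈ objFinset (Set.univ : Set C), f x ∧
      ∀ s : Finset A, s.Nonempty →
        eulerChar {x : C | ∀ a ∈ s, x ∈ (D a).objs}
          = ∑ x ∈ objFinset {x : C | ∀ a ∈ s, x ∈ (D a).objs}, f x := by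
    rcases h with hI | hF
    · obtain ⟨v, hv⟩ := hC.2
      refine ⟨v, eulerChar_eq_sum_coweighting hC hv, fun s hs => ?_⟩
      refine eulerChar_eq_sum_coweighting (hD s hs) ?_
      intro b hb
      rw [← hv b (Set.mem_univ b)]
      refine Finset.sum_subset (fun a _ => mem_objFinset.mpr (Set.mem_univ a)) ?_
      intro a _ ha
      have hcard : Fintype.card (a ⟶ b) = 0 := by
        by_contra hc
        have hne : Nonempty (a ⟶ b) := Fintype.card_pos_iff.mp (Nat.pos_of_ne_zero hc)
        exact ha (mem_objFinset.mpr fun a0 ha0 => (hI a0).2 b a (hb a0 ha0) hne)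
      simp [hcard]
    · obtain ⟨w, hw⟩ := hC.1
      refine ⟨w, eulerChar_eq_sum_weighting hC hw, fun s hs => ?_⟩
      refine eulerChar_eq_sum_weighting (hD s hs) ?_
      intro a ha
      rw [← hw a (Set.mem_univ a)]
      refine Finset.sum_subset (fun b _ => mem_objFinset.mpr (Set.mem_univ b)) ?_
      intro b _ hb
      have hcard : Fintype.card (a ⟶ b) = 0 := by
        by_contra hc
        have hne : Nonempty (a ⟶ b) := Fintype.card_pos_iff.mp (Nat.pos_of_ne_zero hc)
        exact hb (mem_objFinset.mpr fun a0 ha0 => (hF a0).2 a b (ha a0 ha0) hne)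
      simp [hcard]
  rw [hfC, sum_objFinset]
  simp only [Set.mem_univ, if_true]
  have step : ∀ i ∈ Finset.range (Fintype.card A),
      ∑ s ∈ Finset.univ.filter (fun s : Finset A => s.card = i + 1),
        (-1 : ℚ) ^ i * eulerChar {x : C | ∀ a ∈ s, x ∈ (D a).objs}
      = ∑ x : C, ∑ s ∈ Finset.univ.filter (fun s : Finset A => s.card = i + 1),
          (-1 : ℚ) ^ i * (if x ∈ {x : C | ∀ a ∈ s, x ∈ (D a).objs} then f x else 0) := by
    intro i _
    rw [Finset.sum_comm]
    refine Finset.sum_congr rfl fun s hs => ?_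
    have hcard : s.card = i + 1 := (Finset.mem_filter.mp hs).2
    have hne : s.Nonempty := Finset.card_pos.mp (by omega)
    rw [hfS s hne, sum_objFinset, Finset.mul_sum]
    refine Finset.sum_congr rfl fun y _ => ?_
    by_cases hy : y ∈ {x : C | ∀ a ∈ s, x ∈ (D a).objs} <;> simp [hy]
  rw [Finset.sum_congr rfl step, Finset.sum_comm]
  refine Finset.sum_congr rfl fun x _ => ?_
  set T : Finset A := Finset.univ.filter (fun a => x ∈ (D a).objs) with hT
  have hTne : T.Nonempty := by
    obtain ⟨a, ha⟩ := hcover.1 x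
    exact ⟨a, by simp [hT, ha]⟩
  have hTcard : 1 ≤ T.card := Finset.card_pos.mpr hTne
  have hNA : T.card ≤ Fintype.card A := Finset.card_le_univ T
  have hcond : ∀ s : Finset A, (x ∈ {x : C | ∀ a ∈ s, x ∈ (D a).objs}) ↔ s ⊆ T := by
    intro s
    simp only [Set.mem_setOf_eq, hT, Finset.subset_iff, Finset.mem_filter,
      Finset.mem_univ, true_and]
  have key : ∑ i ∈ Finset.range (Fintype.card A), (-1 : ℚ) ^ i * (T.card.choose (i + 1) : ℚ) = 1 := by
    rw [← Finset.sum_subset (Finset.range_subset_range.mpr hNA)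
      (fun i _ hi => ?_)]
    · exact alt_binom_sum T.card hTcard
    · have hlt : T.card < i + 1 := by
        have := Finset.mem_range.not.mp hi
        omega
      rw [Nat.choose_eq_zero_of_lt hlt]
      simp
  calc f x = (∑ i ∈ Finset.range (Fintype.card A),
        (-1 : ℚ) ^ i * (T.card.choose (i + 1) : ℚ)) * f x := by rw [key, one_mul]
    _ = ∑ i ∈ Finset.range (Fintype.card A),
        (-1 : ℚ) ^ i * (T.card.choose (i + 1) : ℚ) * f x := by rw [Finset.sum_mul]
    _ = ∑ i ∈ Finset.range (Fintype.card A),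
        ∑ s ∈ Finset.univ.filter (fun s : Finset A => s.card = i + 1),
          (-1 : ℚ) ^ i * (if x ∈ {x : C | ∀ a ∈ s, x ∈ (D a).objs} then f x else 0) := by
      refine Finset.sum_congr rfl fun i _ => ?_
      simp only [hcond]
      rw [← Finset.mul_sum, ← Finset.sum_filter, Finset.sum_const, nsmul_eq_mul]
      have hpc : (Finset.univ.filter (fun s : Finset A => s.card = i + 1)).filter
          (fun s => s ⊆ T) = Finset.powersetCard (i + 1) T := by
        ext s
        simp [Finset.mem_powersetCard, and_comm]
      rw [hpc, Finset.card_powersetCard]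
      ring
end
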